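/- Cheeger inequality for the discrete magnetic Laplacian: for a finite weighted graph G with signature s : E^{or} → U(1) and vertex measure μ, we have (1/2) λ₁(Δ_μ^s) ≤ h₁^s(μ) ≤ (3/2) √(2 d_μ λ₁(Δ_μ^s)). -/

import Mathlib

open Finset

/-- Rayleigh quotient of `f` for the magnetic Laplacian with weights `w`,
vertex measure `μ` and signature `s` (each unordered edge counted once). -/
noncomputable def rayleigh {V : Type*} [Fintype V] (G : SimpleGraph V) [DecidableRel G.Adj]
    (w : V → V → ℝ) (μ : V → ℝ) (s : V → V → ℂ) (f : V → ℂ) : ℝ :=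
  ((1 / 2) * ∑ u : V, ∑ v : V, if G.Adj u v then w u v * ‖f u - s u v * f v‖ ^ 2 else 0) /
    (∑ u : V, ‖f u‖ ^ 2 * μ u)

/-- The first eigenvalue of the magnetic Laplacian, characterized by the
variational (min-max) principle as the infimum of Rayleigh quotients. -/
noncomputable def lam1 {V : Type*} [Fintype V] (G : SimpleGraph V) [DecidableRel G.Adj]
    (w : V → V → ℝ) (μ : V → ℝ) (s : V → V → ℂ) : ℝ :=
  sInf { x : ℝ | ∃ f : V → ℂ, f ≠ 0 ∧ x = rayleigh G w μ s f }

/-- Frustration index of `V1` with `U(1)`-valued switching functions. -/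
noncomputable def frusIdx {V : Type*} [Fintype V] (G : SimpleGraph V) [DecidableRel G.Adj]
    (w : V → V → ℝ) (s : V → V → ℂ) (V1 : Finset V) : ℝ :=
  sInf { x : ℝ | ∃ τ : V → ℂ, (∀ u, ‖τ u‖ = 1) ∧
    x = (1 / 2) * ∑ u ∈ V1, ∑ v ∈ V1, if G.Adj u v then w u v * ‖τ u - s u v * τ v‖ else 0 }

/-- Weighted boundary measure `|E(V1, V1ᶜ)|`. -/
noncomputable def bdry {V : Type*} [Fintype V] [DecidableEq V] (G : SimpleGraph V)
    [DecidableRel G.Adj] (w : V → V → ℝ) (V1 : Finset V) : ℝ :=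
  ∑ u ∈ V1, ∑ v ∈ V1ᶜ, if G.Adj u v then w u v else 0

/-- `μ`-volume of `V1`. -/
noncomputable def vol {V : Type*} [Fintype V] (μ : V → ℝ) (V1 : Finset V) : ℝ :=
  ∑ u ∈ V1, μ u

/-- The Cheeger constant `h₁ˢ(μ)`. -/
noncomputable def cheeger1 {V : Type*} [Fintype V] [DecidableEq V] (G : SimpleGraph V)
    [DecidableRel G.Adj] (w : V → V → ℝ) (μ : V → ℝ) (s : V → V → ℂ) : ℝ :=
  sInf { x : ℝ | ∃ V1 : Finset V, V1.Nonempty ∧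
    x = (frusIdx G w s V1 + bdry G w V1) / vol μ V1 }

/-- Maximal `μ`-degree `d_μ`. -/
noncomputable def dmu {V : Type*} [Fintype V] (G : SimpleGraph V) [DecidableRel G.Adj]
    (w : V → V → ℝ) (μ : V → ℝ) : ℝ :=
  ⨆ u : V, (∑ v : V, if G.Adj u v then w u v else 0) / μ u

noncomputable def phase (z : ℂ) : ℂ := if z = 0 then 1 else z / ‖z‖

lemma norm_phase (z : ℂ) : ‖phase z‖ = 1 := by
  unfold phase
  split_ifs with h
  · simp
  · rw [norm_div]
    simp only [Complex.norm_real, Real.norm_eq_abs, abs_norm]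
    exact div_self (norm_ne_zero_iff.mpr h)

lemma phase_spec {z : ℂ} (h : z ≠ 0) : (‖z‖ : ℂ) * phase z = z := by
  unfold phase
  rw [if_neg h, mul_div_cancel₀]
  exact_mod_cast norm_ne_zero_iff.mpr h

lemma norm_sq_complex (z : ℂ) : ‖z‖ ^ 2 = Complex.normSq z := by
  rw [Complex.sq_norm]

lemma phase_key (α β : ℂ) (hα : ‖α‖ = 1) (hβ : ‖β‖ = 1) {r t : ℝ} (hr : 0 ≤ r) (hrt : r ≤ t) :
    r * ‖α - β‖ ≤ ‖(r : ℂ) * α - (t : ℂ) * β‖ := by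
  set c := (α * (starRingEnd ℂ) β).re with hcdef
  have hc : c ≤ 1 := by
    calc c ≤ ‖α * (starRingEnd ℂ) β‖ := Complex.re_le_norm _
    _ = 1 := by
        rw [norm_mul, Complex.norm_conj, hα, hβ,
          one_mul]
  have hnα : Complex.normSq α = 1 := by
    rw [Complex.normSq_eq_norm_sq, hα, one_pow]
  have hnβ : Complex.normSq β = 1 := by
    rw [Complex.normSq_eq_norm_sq, hβ, one_pow]
  have h1 : ‖α - β‖ ^ 2 = 2 - 2 * c := by
    rw [norm_sq_complex, Complex.normSq_sub, hnα, hnβ]; ring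
  have h2 : ‖(r : ℂ) * α - (t : ℂ) * β‖ ^ 2 = r ^ 2 + t ^ 2 - 2 * (r * t) * c := by
    rw [norm_sq_complex, Complex.normSq_sub, Complex.normSq_mul, Complex.normSq_mul, hnα, hnβ,
      Complex.normSq_ofReal, Complex.normSq_ofReal]
    have : ((r : ℂ) * α * (starRingEnd ℂ) ((t : ℂ) * β)).re = r * t * c := by
      rw [map_mul, Complex.conj_ofReal]
      have : (r : ℂ) * α * ((t : ℂ) * (starRingEnd ℂ) β) =
          ((r * t : ℝ) : ℂ) * (α * (starRingEnd ℂ) β) := by push_cast; ring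
      rw [this, Complex.re_ofReal_mul, hcdef]
    rw [this]; ring
  have hsq : (r * ‖α - β‖) ^ 2 ≤ ‖(r : ℂ) * α - (t : ℂ) * β‖ ^ 2 := by
    rw [mul_pow, h1, h2]
    nlinarith [mul_nonneg (mul_nonneg hr (sub_nonneg.2 hrt)) (sub_nonneg.2 hc),
      sq_nonneg (t - r)]
  have := le_of_pow_le_pow_left₀ (n := 2) two_ne_zero (norm_nonneg _) hsq
  exact this

lemma edge_key_aux {a b : ℂ} (hab : ‖a‖ ≤ ‖b‖) :
    ‖phase a - phase b‖ * min (‖a‖ ^ 2) (‖b‖ ^ 2) + |‖a‖ ^ 2 - ‖b‖ ^ 2| ≤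
      3 / 2 * (‖a - b‖ * (‖a‖ + ‖b‖)) := by
  have hmin : min (‖a‖ ^ 2) (‖b‖ ^ 2) = ‖a‖ ^ 2 :=
    min_eq_left (by nlinarith [norm_nonneg a, norm_nonneg b])
  have habs : |‖a‖ ^ 2 - ‖b‖ ^ 2| = ‖b‖ ^ 2 - ‖a‖ ^ 2 := by
    rw [abs_sub_comm, abs_of_nonneg (by nlinarith [norm_nonneg a])]
  rw [hmin, habs]
  have hd : |‖a‖ - ‖b‖| ≤ ‖a - b‖ := abs_norm_sub_norm_le a b
  have hd' : ‖b‖ - ‖a‖ ≤ ‖a - b‖ := by rw [abs_sub_comm] at hd; exact (abs_le.mp hd).2 |>.trans_eq rfl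
  by_cases ha : a = 0
  · subst ha
    simp only [norm_zero, zero_sub, norm_neg]
    nlinarith [norm_nonneg b, norm_nonneg (phase 0 - phase b), norm_phase (0 : ℂ),
      norm_phase b, norm_sub_norm_le (phase 0) (phase b),
      norm_add_le (phase 0) (-phase b)]
  · have hb : b ≠ 0 := by
      intro h; subst h; simp only [norm_zero] at hab
      exact ha (norm_eq_zero.mp (le_antisymm hab (norm_nonneg a)))
    have key : ‖a‖ * ‖phase a - phase b‖ ≤ ‖a - b‖ := by
      have := phase_key (phase a) (phase b) (norm_phase a) (norm_phase b)
        (norm_nonneg a) hab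
      rwa [phase_spec ha, phase_spec hb] at this
    nlinarith [norm_nonneg (a - b), norm_nonneg a, norm_nonneg b,
      norm_nonneg (phase a - phase b)]

lemma edge_key (a b : ℂ) :
    ‖phase a - phase b‖ * min (‖a‖ ^ 2) (‖b‖ ^ 2) + |‖a‖ ^ 2 - ‖b‖ ^ 2| ≤
      3 / 2 * (‖a - b‖ * (‖a‖ + ‖b‖)) := by
  rcases le_total ‖a‖ ‖b‖ with h | h
  · exact edge_key_aux h
  · have := edge_key_aux h
    rwa [min_comm, abs_sub_comm, norm_sub_rev (phase b), norm_sub_rev b a, add_comm ‖b‖] at this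

lemma edge_key' (a z σ : ℂ) (hσ : ‖σ‖ = 1) :
    ‖phase a - σ * phase z‖ * min (‖a‖ ^ 2) (‖z‖ ^ 2) + |‖a‖ ^ 2 - ‖z‖ ^ 2| ≤
      3 / 2 * (‖a - σ * z‖ * (‖a‖ + ‖z‖)) := by
  have hnz : ‖σ * z‖ = ‖z‖ := by rw [norm_mul, hσ, one_mul]
  by_cases hz : z = 0
  · subst hz
    simp only [norm_zero, mul_zero, sub_zero]
    have hm : min (‖a‖ ^ 2) ((0:ℝ) ^ 2) = 0 := by
      rw [min_eq_right (by rw [zero_pow two_ne_zero]; positivity : ((0:ℝ))^2 ≤ ‖a‖^2)]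
      norm_num
    rw [hm, mul_zero, zero_add]
    rw [abs_of_nonneg (by rw [zero_pow two_ne_zero, sub_zero]; positivity :
      (0:ℝ) ≤ ‖a‖ ^ 2 - 0 ^ 2)]
    nlinarith [norm_nonneg a]
  · have hσ0 : σ ≠ 0 := by intro h; rw [h, norm_zero] at hσ; norm_num at hσ
    have hσz : σ * z ≠ 0 := mul_ne_zero hσ0 hz
    have hph : σ * phase z = phase (σ * z) := by
      unfold phase
      rw [if_neg hz, if_neg hσz, hnz]
      ring
    rw [hph]
    have h2 := edge_key a (σ * z)
    rwa [hnz] at h2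

open MeasureTheory in
lemma intInt_indicator {S : Set ℝ} (hS : MeasurableSet S) (A T : ℝ) :
    IntervalIntegrable (S.indicator fun _ => A) volume 0 T := by
  constructor <;>
    exact (MeasureTheory.integrableOn_const measure_Ioc_lt_top.ne).indicator hS

open MeasureTheory in
lemma integral_indicator_const_Iio {m T : ℝ} (hm : 0 ≤ m) (hmT : m ≤ T) (A : ℝ) :
    ∫ t in (0:ℝ)..T, (Set.Iio m).indicator (fun _ => A) t = A * m := by
  rw [intervalIntegral.integral_of_le (hm.trans hmT),
    MeasureTheory.setIntegral_indicator measurableSet_Iio]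
  have hset : Set.Ioc (0:ℝ) T ∩ Set.Iio m = Set.Ioo 0 m := by
    ext x
    simp only [Set.mem_inter_iff, Set.mem_Ioc, Set.mem_Iio, Set.mem_Ioo]
    constructor
    · rintro ⟨⟨h1, _⟩, h3⟩; exact ⟨h1, h3⟩
    · rintro ⟨h1, h2⟩; exact ⟨⟨h1, (h2.trans_le hmT).le⟩, h2⟩
  rw [hset, MeasureTheory.setIntegral_const, measureReal_def, Real.volume_Ioo, sub_zero,
    ENNReal.toReal_ofReal hm, smul_eq_mul, mul_comm]

open MeasureTheory in
lemma integral_indicator_const_Ico {p q T : ℝ} (hp : 0 ≤ p) (hq0 : 0 ≤ q) (hq : q ≤ T) (A : ℝ) :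
    ∫ t in (0:ℝ)..T, (Set.Ico p q).indicator (fun _ => A) t = A * max (q - p) 0 := by
  rw [intervalIntegral.integral_of_le (hq0.trans hq),
    MeasureTheory.setIntegral_indicator measurableSet_Ico]
  have hmeas : (volume (Set.Ioc (0:ℝ) T ∩ Set.Ico p q)).toReal = max (q - p) 0 := by
    rcases eq_or_lt_of_le hp with hp0 | hp0
    · have hset : Set.Ioc (0:ℝ) T ∩ Set.Ico p q = Set.Ioo 0 q := by
        ext x
        simp only [Set.mem_inter_iff, Set.mem_Ioc, Set.mem_Ico, Set.mem_Ioo]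
        constructor
        · rintro ⟨⟨h1, _⟩, _, h4⟩; exact ⟨h1, h4⟩
        · rintro ⟨h1, h2⟩; exact ⟨⟨h1, (h2.trans_le hq).le⟩, hp0 ▸ h1.le, h2⟩
      rw [hset, Real.volume_Ioo, ← hp0, sub_zero, ENNReal.toReal_ofReal']
    · have hset : Set.Ioc (0:ℝ) T ∩ Set.Ico p q = Set.Ico p q := by
        apply Set.inter_eq_right.mpr
        intro x hx
        exact ⟨hp0.trans_le hx.1, (hx.2.trans_le hq).le⟩
      rw [hset, Real.volume_Ico, ENNReal.toReal_ofReal']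
  rw [MeasureTheory.setIntegral_const, measureReal_def, hmeas, smul_eq_mul, mul_comm]


open Finset

set_option linter.unusedSectionVars false
section Main

variable {V : Type*} [Fintype V] [DecidableEq V] (G : SimpleGraph V) [DecidableRel G.Adj]
  (w : V → V → ℝ) (μ : V → ℝ) (s : V → V → ℂ)

lemma rayleigh_nonneg (hw_pos : ∀ u v, G.Adj u v → 0 < w u v) (hμ : ∀ u, 0 < μ u) (f : V → ℂ) :
    0 ≤ rayleigh G w μ s f := by
  unfold rayleigh
  apply div_nonneg
  · apply mul_nonneg (by norm_num)
    apply Finset.sum_nonneg; intro u _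
    apply Finset.sum_nonneg; intro v _
    split_ifs with h
    · exact mul_nonneg (hw_pos u v h).le (by positivity)
    · exact le_refl 0
  · exact Finset.sum_nonneg fun u _ => mul_nonneg (by positivity) (hμ u).le


lemma lam1_nonneg (hw_pos : ∀ u v, G.Adj u v → 0 < w u v) (hμ : ∀ u, 0 < μ u) :
    0 ≤ lam1 G w μ s := by
  apply Real.sInf_nonneg
  rintro x ⟨f, _, rfl⟩
  exact rayleigh_nonneg G w μ s hw_pos hμ f

lemma frus_elt_nonneg (hw_pos : ∀ u v, G.Adj u v → 0 < w u v) (V1 : Finset V) (τ : V → ℂ) :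
    0 ≤ (1 / 2 : ℝ) * ∑ u ∈ V1, ∑ v ∈ V1, if G.Adj u v then w u v * ‖τ u - s u v * τ v‖ else 0 := by
  apply mul_nonneg (by norm_num)
  apply Finset.sum_nonneg; intro u _
  apply Finset.sum_nonneg; intro v _
  split_ifs with h
  · exact mul_nonneg (hw_pos u v h).le (norm_nonneg _)
  · exact le_refl 0

lemma frusIdx_nonneg (hw_pos : ∀ u v, G.Adj u v → 0 < w u v) (V1 : Finset V) :
    0 ≤ frusIdx G w s V1 := by
  apply Real.sInf_nonneg
  rintro x ⟨τ, hτ, rfl⟩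
  exact frus_elt_nonneg G w s hw_pos V1 τ

lemma frusIdx_le (hw_pos : ∀ u v, G.Adj u v → 0 < w u v) (V1 : Finset V) (τ : V → ℂ)
    (hτ : ∀ u, ‖τ u‖ = 1) :
    frusIdx G w s V1 ≤
      (1 / 2 : ℝ) * ∑ u ∈ V1, ∑ v ∈ V1, if G.Adj u v then w u v * ‖τ u - s u v * τ v‖ else 0 := by
  apply csInf_le
  · exact ⟨0, by rintro x ⟨τ', hτ', rfl⟩; exact frus_elt_nonneg G w s hw_pos V1 τ'⟩
  · exact ⟨τ, hτ, rfl⟩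

lemma bdry_nonneg (hw_pos : ∀ u v, G.Adj u v → 0 < w u v) (V1 : Finset V) :
    0 ≤ bdry G w V1 := by
  apply Finset.sum_nonneg; intro u _
  apply Finset.sum_nonneg; intro v _
  split_ifs with h
  · exact (hw_pos u v h).le
  · exact le_refl 0

lemma vol_pos (hμ : ∀ u, 0 < μ u) {V1 : Finset V} (h : V1.Nonempty) : 0 < vol μ V1 :=
  Finset.sum_pos (fun u _ => hμ u) h


lemma double_filter_sum {p : V → Prop} [DecidablePred p] (X : V → V → ℝ) :
    ∑ u ∈ univ.filter p, ∑ v ∈ univ.filter p, X u v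
      = ∑ u : V, ∑ v : V, if p u ∧ p v then X u v else 0 := by
  rw [Finset.sum_filter]
  refine Finset.sum_congr rfl fun u _ => ?_
  by_cases hu : p u
  · rw [if_pos hu, Finset.sum_filter]
    exact Finset.sum_congr rfl fun v _ => by by_cases hv : p v <;> simp [hu, hv]
  · rw [if_neg hu]
    exact (Finset.sum_eq_zero fun v _ => by simp [hu]).symm

lemma double_filter_sum_compl {p : V → Prop} [DecidablePred p] (X : V → V → ℝ) :
    ∑ u ∈ univ.filter p, ∑ v ∈ (univ.filter p)ᶜ, X u v
      = ∑ u : V, ∑ v : V, if p u ∧ ¬ p v then X u v else 0 := by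
  rw [Finset.compl_filter, Finset.sum_filter]
  refine Finset.sum_congr rfl fun u _ => ?_
  by_cases hu : p u
  · rw [if_pos hu, Finset.sum_filter]
    exact Finset.sum_congr rfl fun v _ => by by_cases hv : p v <;> simp [hu, hv]
  · rw [if_neg hu]
    exact (Finset.sum_eq_zero fun v _ => by simp [hu]).symm

lemma part1 (hw_sym : ∀ u v, w u v = w v u)
    (hw_pos : ∀ u v, G.Adj u v → 0 < w u v)
    (hμ : ∀ u, 0 < μ u)
    (hs_unit : ∀ u v, G.Adj u v → ‖s u v‖ = 1) [Nonempty V] :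
    (1 / 2) * lam1 G w μ s ≤ cheeger1 G w μ s := by
  refine le_csInf ⟨(frusIdx G w s Finset.univ + bdry G w Finset.univ) / vol μ Finset.univ,
    ⟨Finset.univ, Finset.univ_nonempty, rfl⟩⟩ ?_
  rintro x ⟨V1, hV1, rfl⟩
  have hvol : 0 < vol μ V1 := vol_pos μ hμ hV1
  rw [le_div_iff₀ hvol]
  apply le_of_forall_pos_le_add
  intro ε hε
  obtain ⟨x, ⟨τ, hτ, rfl⟩, hxlt⟩ := Real.lt_sInf_add_pos
    (⟨_, fun _ => (1 : ℂ), fun _ => by simp, rfl⟩ :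
      Set.Nonempty { x : ℝ | ∃ τ : V → ℂ, (∀ u, ‖τ u‖ = 1) ∧
        x = (1 / 2) * ∑ u ∈ V1, ∑ v ∈ V1, if G.Adj u v then w u v * ‖τ u - s u v * τ v‖ else 0 })
    hε
  set ι := (1 / 2 : ℝ) * ∑ u ∈ V1, ∑ v ∈ V1,
    if G.Adj u v then w u v * ‖τ u - s u v * τ v‖ else 0 with hιdef
  set f : V → ℂ := fun u => if u ∈ V1 then τ u else 0 with hfdef
  obtain ⟨u₀, hu₀⟩ := hV1
  have hf0 : f ≠ 0 := by
    intro h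
    have : f u₀ = 0 := congrFun h u₀
    rw [hfdef] at this
    simp only [if_pos hu₀] at this
    have h1 := hτ u₀
    rw [this, norm_zero] at h1; exact absurd h1.symm one_ne_zero
  -- denominator equals vol
  have hden : ∑ u : V, ‖f u‖ ^ 2 * μ u = vol μ V1 := by
    rw [vol, ← Finset.sum_filter_add_sum_filter_not univ (· ∈ V1)]
    have h2 : ∑ u ∈ univ.filter (¬ · ∈ V1), ‖f u‖ ^ 2 * μ u = 0 := by
      apply Finset.sum_eq_zero
      intro u hu
      rw [Finset.mem_filter] at hu
      simp [hfdef, hu.2]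
    rw [h2, add_zero]
    rw [Finset.filter_mem_eq_inter, Finset.univ_inter]
    exact Finset.sum_congr rfl fun u hu => by simp [hfdef, hu, hτ u]
  -- numerator bound
  have hnum : (1 / 2 : ℝ) * ∑ u : V, ∑ v : V,
      (if G.Adj u v then w u v * ‖f u - s u v * f v‖ ^ 2 else 0) ≤ 2 * ι + bdry G w V1 := by
    set F : V → V → ℝ := fun u v => if G.Adj u v then w u v * ‖f u - s u v * f v‖ ^ 2 else 0
      with hFdef
    have hsplit : ∑ u : V, ∑ v : V, F u v
        = ((∑ u ∈ V1, ∑ v ∈ V1, F u v) + ∑ u ∈ V1, ∑ v ∈ V1ᶜ, F u v)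
          + ((∑ u ∈ V1ᶜ, ∑ v ∈ V1, F u v) + ∑ u ∈ V1ᶜ, ∑ v ∈ V1ᶜ, F u v) := by
      rw [← Finset.sum_add_sum_compl V1 (fun u => ∑ v : V, F u v)]
      congr 1
      · rw [← Finset.sum_add_distrib]
        exact Finset.sum_congr rfl fun u _ => (Finset.sum_add_sum_compl V1 (F u)).symm
      · rw [← Finset.sum_add_distrib]
        exact Finset.sum_congr rfl fun u _ => (Finset.sum_add_sum_compl V1 (F u)).symm
    have hE : ∑ u ∈ V1ᶜ, ∑ v ∈ V1ᶜ, F u v = 0 := by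
      apply Finset.sum_eq_zero; intro u hu
      apply Finset.sum_eq_zero; intro v hv
      rw [Finset.mem_compl] at hu hv
      simp [hFdef, hfdef, hu, hv]
    have hB : ∑ u ∈ V1, ∑ v ∈ V1ᶜ, F u v = bdry G w V1 := by
      rw [bdry]
      refine Finset.sum_congr rfl fun u hu => Finset.sum_congr rfl fun v hv => ?_
      rw [Finset.mem_compl] at hv
      by_cases hadj : G.Adj u v
      · simp only [hFdef, hfdef, if_pos hu, if_neg hv, if_pos hadj, mul_zero, sub_zero]
        rw [hτ u]; norm_num
      · simp [hFdef, hadj]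
    have hC : ∑ u ∈ V1ᶜ, ∑ v ∈ V1, F u v = bdry G w V1 := by
      rw [bdry, Finset.sum_comm]
      refine Finset.sum_congr rfl fun u hu => Finset.sum_congr rfl fun v hv => ?_
      rw [Finset.mem_compl] at hv
      by_cases hadj : G.Adj v u
      · have hadj' : G.Adj u v := hadj.symm
        simp only [hFdef, hfdef, if_pos hu, if_neg hv, if_pos hadj, if_pos hadj', zero_sub,
          norm_neg]
        rw [norm_mul, hs_unit v u hadj, hτ u, hw_sym u v]; norm_num
      · have hadj' : ¬ G.Adj u v := fun h => hadj h.symm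
        simp [hFdef, hadj, hadj']
    have hA : ∑ u ∈ V1, ∑ v ∈ V1, F u v ≤ 4 * ι := by
      have : ∀ u ∈ V1, ∀ v ∈ V1, F u v ≤
          2 * (if G.Adj u v then w u v * ‖τ u - s u v * τ v‖ else 0) := by
        intro u hu v hv
        by_cases hadj : G.Adj u v
        · simp only [hFdef, hfdef, if_pos hu, if_pos hv, if_pos hadj]
          have hle2 : ‖τ u - s u v * τ v‖ ≤ 2 := by
            calc ‖τ u - s u v * τ v‖ ≤ ‖τ u‖ + ‖s u v * τ v‖ := norm_sub_le _ _
            _ = 2 := by rw [norm_mul, hτ u, hτ v, hs_unit u v hadj]; norm_num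
          have hwn := (hw_pos u v hadj).le
          nlinarith [mul_nonneg hwn (mul_nonneg (sub_nonneg.2 hle2)
            (norm_nonneg (τ u - s u v * τ v)))]
        · simp [hFdef, hadj]
      calc ∑ u ∈ V1, ∑ v ∈ V1, F u v
          ≤ ∑ u ∈ V1, ∑ v ∈ V1,
            2 * (if G.Adj u v then w u v * ‖τ u - s u v * τ v‖ else 0) :=
            Finset.sum_le_sum fun u hu => Finset.sum_le_sum fun v hv => this u hu v hv
        _ = 4 * ι := by
            rw [hιdef]
            simp only [← Finset.mul_sum]
            ring
    have hbnn : 0 ≤ bdry G w V1 := bdry_nonneg G w hw_pos V1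
    rw [hsplit, hE, hB, hC, add_zero]
    linarith
  have hlam : lam1 G w μ s ≤ rayleigh G w μ s f := by
    apply csInf_le ⟨0, by rintro y ⟨g, _, rfl⟩; exact rayleigh_nonneg G w μ s hw_pos hμ g⟩
    exact ⟨f, hf0, rfl⟩
  have hray : rayleigh G w μ s f ≤ (2 * ι + bdry G w V1) / vol μ V1 := by
    rw [rayleigh, hden]
    exact (div_le_div_iff_of_pos_right hvol).mpr hnum
  have h1 : lam1 G w μ s * vol μ V1 ≤ 2 * ι + bdry G w V1 :=
    (le_div_iff₀ hvol).mp (hlam.trans hray)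
  have hfr : ι < frusIdx G w s V1 + ε := hxlt
  have hbnn : 0 ≤ bdry G w V1 := bdry_nonneg G w hw_pos V1
  linarith

set_option maxHeartbeats 1000000 in
open MeasureTheory in
lemma exists_good_cut (hw_sym : ∀ u v, w u v = w v u)
    (hw_pos : ∀ u v, G.Adj u v → 0 < w u v)
    (hμ : ∀ u, 0 < μ u)
    (hs_unit : ∀ u v, G.Adj u v → ‖s u v‖ = 1) [Nonempty V]
    (f : V → ℂ) (hf : f ≠ 0) :
    ∃ V1 : Finset V, V1.Nonempty ∧
      frusIdx G w s V1 + bdry G w V1 ≤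
        (3 / 2) * Real.sqrt (2 * dmu G w μ * rayleigh G w μ s f) * vol μ V1 := by
  classical
  set lam := rayleigh G w μ s f with hlamdef
  set d := dmu G w μ with hddef
  set K := (3 / 2 : ℝ) * Real.sqrt (2 * d * lam) with hKdef
  set τ : V → ℂ := fun u => phase (f u) with hτdef
  set c : V → ℝ := fun u => ‖f u‖ ^ 2 with hcdef
  have hc0 : ∀ u, 0 ≤ c u := fun u => by positivity
  obtain ⟨u₀, hu₀⟩ : ∃ u, f u ≠ 0 := Function.ne_iff.mp hf
  obtain ⟨u₁, -, hu₁⟩ := Finset.exists_max_image Finset.univ c ⟨u₀, Finset.mem_univ u₀⟩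
  set T := c u₁ with hTdef
  have hT : ∀ u, c u ≤ T := fun u => hu₁ u (Finset.mem_univ u)
  have hcu₀ : 0 < c u₀ := pow_pos (norm_pos_iff.mpr hu₀) 2
  have hT0 : 0 < T := lt_of_lt_of_le hcu₀ (hT u₀)
  by_contra hcon
  push_neg at hcon
  set Φ : ℝ → ℝ := fun t =>
    (∑ u : V, ∑ v : V, if G.Adj u v ∧ t < c u ∧ t < c v
        then 1 / 2 * (w u v * ‖τ u - s u v * τ v‖) else 0)
      + (∑ u : V, ∑ v : V, if G.Adj u v ∧ t < c u ∧ ¬ t < c v then w u v else 0)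
      - K * ∑ u : V, (if t < c u then μ u else 0) with hΦdef
  -- positivity on (0, T)
  have hpos : ∀ t ∈ Set.Ioo (0:ℝ) T, 0 < Φ t := by
    intro t ht
    set V1 : Finset V := univ.filter (fun u => t < c u) with hV1def
    have hV1ne : V1.Nonempty := ⟨u₁, by simp [hV1def]; exact ht.2⟩
    have hvol : ∑ u : V, (if t < c u then μ u else 0) = vol μ V1 := by
      rw [vol, hV1def, Finset.sum_filter]
    have hbd : (∑ u : V, ∑ v : V, if G.Adj u v ∧ t < c u ∧ ¬ t < c v then w u v else 0)
        = bdry G w V1 := by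
      rw [bdry, hV1def, double_filter_sum_compl]
      refine Finset.sum_congr rfl fun u _ => Finset.sum_congr rfl fun v _ => ?_
      split_ifs <;> tauto
    have hfr : frusIdx G w s V1 ≤
        ∑ u : V, ∑ v : V, if G.Adj u v ∧ t < c u ∧ t < c v
          then 1 / 2 * (w u v * ‖τ u - s u v * τ v‖) else 0 := by
      refine (frusIdx_le G w s hw_pos V1 τ (fun u => norm_phase (f u))).trans (le_of_eq ?_)
      rw [hV1def, double_filter_sum, Finset.mul_sum]
      refine Finset.sum_congr rfl fun u _ => ?_
      rw [Finset.mul_sum]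
      refine Finset.sum_congr rfl fun v _ => ?_
      by_cases hp : t < c u ∧ t < c v
      · by_cases hadj : G.Adj u v
        · rw [if_pos hp, if_pos hadj, if_pos (⟨hadj, hp⟩ : G.Adj u v ∧ t < c u ∧ t < c v)]
        · rw [if_pos hp, if_neg hadj, if_neg (fun h => hadj h.1)]; ring
      · rw [if_neg hp, if_neg (fun h => hp h.2)]; ring
    have := hcon V1 hV1ne
    have hfb := hfr
    rw [hΦdef]
    simp only
    rw [hbd, hvol]
    linarith
  -- indicator forms
  have e1 : ∀ u v : V, (fun t : ℝ => if G.Adj u v ∧ t < c u ∧ t < c v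
      then 1 / 2 * (w u v * ‖τ u - s u v * τ v‖) else 0)
      = (Set.Iio (min (c u) (c v))).indicator
          (fun _ => if G.Adj u v then 1 / 2 * (w u v * ‖τ u - s u v * τ v‖) else 0) := by
    intro u v; funext t
    simp only [Set.indicator_apply, Set.mem_Iio, lt_min_iff]
    by_cases hadj : G.Adj u v
    · by_cases h1 : t < c u ∧ t < c v
      · rw [if_pos ⟨hadj, h1⟩, if_pos h1, if_pos hadj]
      · rw [if_neg (fun h => h1 h.2), if_neg h1]
    · by_cases h1 : t < c u ∧ t < c v
      · rw [if_neg (fun h => hadj h.1), if_pos h1, if_neg hadj]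
      · rw [if_neg (fun h => hadj h.1), if_neg h1]
  have e2 : ∀ u v : V, (fun t : ℝ => if G.Adj u v ∧ t < c u ∧ ¬ t < c v then w u v else 0)
      = (Set.Ico (c v) (c u)).indicator (fun _ => if G.Adj u v then w u v else 0) := by
    intro u v; funext t
    simp only [Set.indicator_apply, Set.mem_Ico]
    by_cases hadj : G.Adj u v
    · by_cases h1 : t < c u ∧ ¬ t < c v
      · rw [if_pos ⟨hadj, h1⟩, if_pos ⟨not_lt.mp h1.2, h1.1⟩, if_pos hadj]
      · have h2 : ¬ (c v ≤ t ∧ t < c u) := fun h => h1 ⟨h.2, not_lt.mpr h.1⟩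
        rw [if_neg (fun h => h1 h.2), if_neg h2]
    · by_cases h1 : c v ≤ t ∧ t < c u
      · rw [if_neg (fun h => hadj h.1), if_pos h1, if_neg hadj]
      · rw [if_neg (fun h => hadj h.1), if_neg h1]
  have e3 : ∀ u : V, (fun t : ℝ => if t < c u then μ u else 0)
      = (Set.Iio (c u)).indicator (fun _ => μ u) := by
    intro u; funext t
    simp only [Set.indicator_apply, Set.mem_Iio]
  have int1 : ∀ u v : V, IntervalIntegrable (fun t : ℝ => if G.Adj u v ∧ t < c u ∧ t < c v
      then 1 / 2 * (w u v * ‖τ u - s u v * τ v‖) else 0) volume 0 T := fun u v => by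
    rw [e1 u v]; exact intInt_indicator measurableSet_Iio _ _
  have int2 : ∀ u v : V, IntervalIntegrable
      (fun t : ℝ => if G.Adj u v ∧ t < c u ∧ ¬ t < c v then w u v else 0) volume 0 T :=
    fun u v => by rw [e2 u v]; exact intInt_indicator measurableSet_Ico _ _
  have int3 : ∀ u : V, IntervalIntegrable (fun t : ℝ => if t < c u then μ u else 0)
      volume 0 T := fun u => by rw [e3 u]; exact intInt_indicator measurableSet_Iio _ _
  have sum_int : ∀ {F : V → ℝ → ℝ}, (∀ u, IntervalIntegrable (F u) volume 0 T) →
      IntervalIntegrable (fun t => ∑ u : V, F u t) volume 0 T := by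
    intro F hF
    have h : (fun t => ∑ u : V, F u t) = ∑ u : V, F u := by
      funext t; rw [Finset.sum_apply]
    rw [h]
    exact IntervalIntegrable.sum _ (fun u _ => hF u)
  have intS1 : IntervalIntegrable (fun t => ∑ u : V, ∑ v : V,
      if G.Adj u v ∧ t < c u ∧ t < c v then 1 / 2 * (w u v * ‖τ u - s u v * τ v‖) else 0)
      volume 0 T := sum_int fun u => sum_int fun v => int1 u v
  have intS2 : IntervalIntegrable (fun t => ∑ u : V, ∑ v : V,
      if G.Adj u v ∧ t < c u ∧ ¬ t < c v then w u v else 0) volume 0 T :=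
    sum_int fun u => sum_int fun v => int2 u v
  have intS3 : IntervalIntegrable (fun t => ∑ u : V, if t < c u then μ u else 0) volume 0 T :=
    sum_int fun u => int3 u
  have hΦint : IntervalIntegrable Φ volume 0 T := by
    rw [hΦdef]
    exact (intS1.add intS2).sub (intS3.const_mul K)
  -- integral values
  set D : ℝ := ∑ u : V, ‖f u‖ ^ 2 * μ u with hDdef
  have hD0 : 0 < D := by
    apply Finset.sum_pos'
    · intro u _; exact mul_nonneg (by positivity) (hμ u).le
    · exact ⟨u₀, Finset.mem_univ u₀, mul_pos (pow_pos (norm_pos_iff.mpr hu₀) 2) (hμ u₀)⟩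
  have I1 : (∫ t in (0:ℝ)..T, ∑ u : V, ∑ v : V,
      if G.Adj u v ∧ t < c u ∧ t < c v then 1 / 2 * (w u v * ‖τ u - s u v * τ v‖) else 0)
      = ∑ u : V, ∑ v : V,
        (if G.Adj u v then 1 / 2 * (w u v * ‖τ u - s u v * τ v‖) else 0) * min (c u) (c v) := by
    rw [intervalIntegral.integral_finset_sum (fun u _ => sum_int fun v => int1 u v)]
    refine Finset.sum_congr rfl fun u _ => ?_
    rw [intervalIntegral.integral_finset_sum (fun v _ => int1 u v)]
    refine Finset.sum_congr rfl fun v _ => ?_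
    rw [e1 u v]
    exact integral_indicator_const_Iio (le_min (hc0 u) (hc0 v))
      ((min_le_left _ _).trans (hT u)) _
  have I2 : (∫ t in (0:ℝ)..T, ∑ u : V, ∑ v : V,
      if G.Adj u v ∧ t < c u ∧ ¬ t < c v then w u v else 0)
      = ∑ u : V, ∑ v : V, (if G.Adj u v then w u v else 0) * max (c u - c v) 0 := by
    rw [intervalIntegral.integral_finset_sum (fun u _ => sum_int fun v => int2 u v)]
    refine Finset.sum_congr rfl fun u _ => ?_
    rw [intervalIntegral.integral_finset_sum (fun v _ => int2 u v)]
    refine Finset.sum_congr rfl fun v _ => ?_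
    rw [e2 u v]
    exact integral_indicator_const_Ico (hc0 v) (hc0 u) (hT u) _
  have I3 : (∫ t in (0:ℝ)..T, ∑ u : V, if t < c u then μ u else 0) = D := by
    rw [intervalIntegral.integral_finset_sum (fun u _ => int3 u)]
    rw [hDdef]
    refine Finset.sum_congr rfl fun u _ => ?_
    rw [e3 u, integral_indicator_const_Iio (hc0 u) (hT u), mul_comm]
  have hIΦ : (∫ t in (0:ℝ)..T, Φ t)
      = (∑ u : V, ∑ v : V,
          (if G.Adj u v then 1 / 2 * (w u v * ‖τ u - s u v * τ v‖) else 0) * min (c u) (c v))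
        + (∑ u : V, ∑ v : V, (if G.Adj u v then w u v else 0) * max (c u - c v) 0)
        - K * D := by
    simp only [hΦdef]
    rw [intervalIntegral.integral_sub (intS1.add intS2) (intS3.const_mul K),
      intervalIntegral.integral_add intS1 intS2, intervalIntegral.integral_const_mul, I1, I2, I3]
  -- notation for the pieces
  set S1 : ℝ := ∑ u : V, ∑ v : V,
    (if G.Adj u v then 1 / 2 * (w u v * ‖τ u - s u v * τ v‖) else 0) * min (c u) (c v)
    with hS1def
  set S2 : ℝ := ∑ u : V, ∑ v : V, (if G.Adj u v then w u v else 0) * max (c u - c v) 0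
    with hS2def
  -- symmetrize S2
  have hswap0 : (∑ u : V, ∑ v : V, (if G.Adj u v then w u v else 0) * max (c u - c v) 0)
      = ∑ u : V, ∑ v : V, (if G.Adj u v then w u v else 0) * max (c v - c u) 0 := by
    calc (∑ u : V, ∑ v : V, (if G.Adj u v then w u v else 0) * max (c u - c v) 0)
        = ∑ v : V, ∑ u : V, (if G.Adj u v then w u v else 0) * max (c u - c v) 0 :=
          Finset.sum_comm
      _ = ∑ u : V, ∑ v : V, (if G.Adj u v then w u v else 0) * max (c v - c u) 0 :=
          Finset.sum_congr rfl fun a _ => Finset.sum_congr rfl fun b _ => by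
            by_cases h : G.Adj a b
            · rw [if_pos h, if_pos h.symm, hw_sym b a]
            · rw [if_neg h, if_neg (fun h' => h h'.symm)]
  have hswap : S2 = ∑ u : V, ∑ v : V, (if G.Adj u v then w u v else 0) * max (c v - c u) 0 :=
    hS2def.trans hswap0
  have habs : ∀ x : ℝ, max x 0 + max (-x) 0 = |x| := by
    intro x
    rcases le_total x 0 with h | h
    · rw [max_eq_right h, max_eq_left (neg_nonneg.mpr h), zero_add, abs_of_nonpos h]
    · rw [max_eq_left h, max_eq_right (neg_nonpos.mpr h), add_zero, abs_of_nonneg h]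
  have hS2' : 2 * S2 = ∑ u : V, ∑ v : V, (if G.Adj u v then w u v else 0) * |c u - c v| := by
    rw [two_mul]
    nth_rewrite 2 [hswap]
    rw [hS2def, ← Finset.sum_add_distrib]
    refine Finset.sum_congr rfl fun u _ => ?_
    rw [← Finset.sum_add_distrib]
    refine Finset.sum_congr rfl fun v _ => ?_
    rw [← mul_add]
    congr 1
    rw [← habs (c u - c v)]
    congr 2
    ring
  -- pointwise estimate, edge by edge
  set Sig : ℝ := ∑ u : V, ∑ v : V,
    (if G.Adj u v then w u v * (‖f u - s u v * f v‖ * (‖f u‖ + ‖f v‖)) else 0) with hSigdef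
  have hpoint : S1 + S2 ≤ 3 / 4 * Sig := by
    have key : ∀ u v : V,
        (if G.Adj u v then 1 / 2 * (w u v * ‖τ u - s u v * τ v‖) else 0) * min (c u) (c v)
          + 1 / 2 * ((if G.Adj u v then w u v else 0) * |c u - c v|)
        ≤ 3 / 4 * (if G.Adj u v then w u v * (‖f u - s u v * f v‖ * (‖f u‖ + ‖f v‖)) else 0) := by
      intro u v
      by_cases hadj : G.Adj u v
      · rw [if_pos hadj, if_pos hadj, if_pos hadj]
        have hek := edge_key' (f u) (f v) (s u v) (hs_unit u v hadj)
        have hw2 : (0:ℝ) ≤ w u v / 2 := by linarith [(hw_pos u v hadj).le]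
        have hmul := mul_le_mul_of_nonneg_left hek hw2
        have hτu : τ u = phase (f u) := rfl
        have hτv : τ v = phase (f v) := rfl
        rw [hτu, hτv]
        have hcu : c u = ‖f u‖ ^ 2 := rfl
        have hcv : c v = ‖f v‖ ^ 2 := rfl
        rw [hcu, hcv]
        nlinarith [hmul]
      · rw [if_neg hadj, if_neg hadj, if_neg hadj]
        norm_num
    calc S1 + S2 = S1 + 1 / 2 * (2 * S2) := by ring
      _ = ∑ u : V, ∑ v : V,
          ((if G.Adj u v then 1 / 2 * (w u v * ‖τ u - s u v * τ v‖) else 0) * min (c u) (c v)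
            + 1 / 2 * ((if G.Adj u v then w u v else 0) * |c u - c v|)) := by
          rw [hS2', hS1def, Finset.mul_sum, ← Finset.sum_add_distrib]
          refine Finset.sum_congr rfl fun u _ => ?_
          rw [Finset.mul_sum, ← Finset.sum_add_distrib]
      _ ≤ ∑ u : V, ∑ v : V,
          3 / 4 * (if G.Adj u v then w u v * (‖f u - s u v * f v‖ * (‖f u‖ + ‖f v‖)) else 0) :=
          Finset.sum_le_sum fun u _ => Finset.sum_le_sum fun v _ => key u v
      _ = 3 / 4 * Sig := by
          rw [hSigdef, Finset.mul_sum]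
          exact Finset.sum_congr rfl fun u _ => (Finset.mul_sum _ _ _).symm
  -- Cauchy-Schwarz
  set TwoN : ℝ := ∑ u : V, ∑ v : V,
    (if G.Adj u v then w u v * ‖f u - s u v * f v‖ ^ 2 else 0) with hTwoNdef
  set Q : ℝ := ∑ u : V, ∑ v : V,
    (if G.Adj u v then w u v * (‖f u‖ + ‖f v‖) ^ 2 else 0) with hQdef
  have hTwoN0 : 0 ≤ TwoN := by
    rw [hTwoNdef]
    refine Finset.sum_nonneg fun u _ => Finset.sum_nonneg fun v _ => ?_
    split_ifs with h
    · exact mul_nonneg (hw_pos u v h).le (by positivity)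
    · exact le_refl 0
  have hQ0 : 0 ≤ Q := by
    rw [hQdef]
    refine Finset.sum_nonneg fun u _ => Finset.sum_nonneg fun v _ => ?_
    split_ifs with h
    · exact mul_nonneg (hw_pos u v h).le (by positivity)
    · exact le_refl 0
  have hSig0 : 0 ≤ Sig := by
    rw [hSigdef]
    refine Finset.sum_nonneg fun u _ => Finset.sum_nonneg fun v _ => ?_
    split_ifs with h
    · exact mul_nonneg (hw_pos u v h).le
        (mul_nonneg (norm_nonneg _) (by positivity))
    · exact le_refl 0
  have hCS : Sig ≤ Real.sqrt TwoN * Real.sqrt Q := by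
    set x : V × V → ℝ := fun p =>
      if G.Adj p.1 p.2 then Real.sqrt (w p.1 p.2) * ‖f p.1 - s p.1 p.2 * f p.2‖ else 0 with hx
    set y : V × V → ℝ := fun p =>
      if G.Adj p.1 p.2 then Real.sqrt (w p.1 p.2) * (‖f p.1‖ + ‖f p.2‖) else 0 with hy
    have hxy : ∑ p : V × V, x p * y p = Sig := by
      rw [hSigdef, Fintype.sum_prod_type]
      refine Finset.sum_congr rfl fun u _ => Finset.sum_congr rfl fun v _ => ?_
      rw [hx, hy]
      by_cases hadj : G.Adj u v
      · simp only [if_pos hadj]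
        rw [show Real.sqrt (w u v) * ‖f u - s u v * f v‖ *
            (Real.sqrt (w u v) * (‖f u‖ + ‖f v‖))
          = (Real.sqrt (w u v) * Real.sqrt (w u v)) *
            (‖f u - s u v * f v‖ * (‖f u‖ + ‖f v‖)) from by ring,
          Real.mul_self_sqrt (hw_pos u v hadj).le]
      · simp [hadj]
    have hx2 : ∑ p : V × V, x p ^ 2 = TwoN := by
      rw [hTwoNdef, Fintype.sum_prod_type]
      refine Finset.sum_congr rfl fun u _ => Finset.sum_congr rfl fun v _ => ?_
      rw [hx]
      by_cases hadj : G.Adj u v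
      · simp only [if_pos hadj]
        rw [mul_pow, Real.sq_sqrt (hw_pos u v hadj).le]
      · simp [hadj]
    have hy2 : ∑ p : V × V, y p ^ 2 = Q := by
      rw [hQdef, Fintype.sum_prod_type]
      refine Finset.sum_congr rfl fun u _ => Finset.sum_congr rfl fun v _ => ?_
      rw [hy]
      by_cases hadj : G.Adj u v
      · simp only [if_pos hadj]
        rw [mul_pow, Real.sq_sqrt (hw_pos u v hadj).le]
      · simp [hadj]
    have hcs := Finset.sum_mul_sq_le_sq_mul_sq Finset.univ x y
    rw [hxy, hx2, hy2] at hcs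
    calc Sig = Real.sqrt (Sig ^ 2) := (Real.sqrt_sq hSig0).symm
      _ ≤ Real.sqrt (TwoN * Q) := Real.sqrt_le_sqrt hcs
      _ = Real.sqrt TwoN * Real.sqrt Q := Real.sqrt_mul hTwoN0 Q
  -- degree bound
  have hd0 : 0 ≤ d := by
    have h1 : (∑ v : V, if G.Adj u₀ v then w u₀ v else 0) / μ u₀ ≤ d := by
      rw [hddef, dmu]
      exact le_ciSup (f := fun u : V => (∑ v : V, if G.Adj u v then w u v else 0) / μ u)
        (Set.Finite.bddAbove (Set.finite_range _)) u₀
    refine le_trans ?_ h1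
    apply div_nonneg _ (hμ u₀).le
    refine Finset.sum_nonneg fun v _ => ?_
    split_ifs with h
    · exact (hw_pos u₀ v h).le
    · exact le_refl 0
  have hdeg : ∀ u : V, (∑ v : V, if G.Adj u v then w u v else 0) ≤ d * μ u := by
    intro u
    have h1 : (∑ v : V, if G.Adj u v then w u v else 0) / μ u ≤ d := by
      rw [hddef, dmu]
      exact le_ciSup (f := fun u : V => (∑ v : V, if G.Adj u v then w u v else 0) / μ u)
        (Set.Finite.bddAbove (Set.finite_range _)) u
    exact (div_le_iff₀ (hμ u)).mp h1
  have hQle : Q ≤ 4 * (d * D) := by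
    have step1 : Q ≤ ∑ u : V, ∑ v : V,
        (if G.Adj u v then w u v * (2 * (c u + c v)) else 0) := by
      rw [hQdef]
      refine Finset.sum_le_sum fun u _ => Finset.sum_le_sum fun v _ => ?_
      split_ifs with h
      · have := (hw_pos u v h).le
        have hcu : c u = ‖f u‖ ^ 2 := rfl
        have hcv : c v = ‖f v‖ ^ 2 := rfl
        rw [hcu, hcv]
        nlinarith [sq_nonneg (‖f u‖ - ‖f v‖)]
      · exact le_refl 0
    have step2 : ∑ u : V, ∑ v : V, (if G.Adj u v then w u v * (2 * (c u + c v)) else 0)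
        = 2 * (∑ u : V, ∑ v : V, (if G.Adj u v then w u v * c u else 0))
          + 2 * (∑ u : V, ∑ v : V, (if G.Adj u v then w u v * c v else 0)) := by
      have e : ∀ u v : V, (if G.Adj u v then w u v * (2 * (c u + c v)) else 0)
          = 2 * (if G.Adj u v then w u v * c u else 0)
            + 2 * (if G.Adj u v then w u v * c v else 0) := by
        intro u v; split_ifs with h <;> ring
      calc ∑ u : V, ∑ v : V, (if G.Adj u v then w u v * (2 * (c u + c v)) else 0)
          = ∑ u : V, ∑ v : V, (2 * (if G.Adj u v then w u v * c u else 0)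
              + 2 * (if G.Adj u v then w u v * c v else 0)) :=
            Finset.sum_congr rfl fun u _ => Finset.sum_congr rfl fun v _ => e u v
        _ = _ := by
            simp only [Finset.sum_add_distrib, ← Finset.mul_sum]
    have step3 : ∑ u : V, ∑ v : V, (if G.Adj u v then w u v * c v else 0)
        = ∑ u : V, ∑ v : V, (if G.Adj u v then w u v * c u else 0) := by
      calc (∑ u : V, ∑ v : V, (if G.Adj u v then w u v * c v else 0))
          = ∑ v : V, ∑ u : V, (if G.Adj u v then w u v * c v else 0) := Finset.sum_comm
        _ = ∑ u : V, ∑ v : V, (if G.Adj u v then w u v * c u else 0) :=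
            Finset.sum_congr rfl fun a _ => Finset.sum_congr rfl fun b _ => by
              by_cases h : G.Adj a b
              · rw [if_pos h, if_pos h.symm, hw_sym b a]
              · rw [if_neg h, if_neg (fun h' => h h'.symm)]
    have step4 : ∑ u : V, ∑ v : V, (if G.Adj u v then w u v * c u else 0) ≤ d * D := by
      have huv : ∀ u : V, ∑ v : V, (if G.Adj u v then w u v * c u else 0)
          = c u * ∑ v : V, (if G.Adj u v then w u v else 0) := by
        intro u
        rw [Finset.mul_sum]
        refine Finset.sum_congr rfl fun v _ => ?_
        split_ifs with h <;> ring
      calc ∑ u : V, ∑ v : V, (if G.Adj u v then w u v * c u else 0)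
          = ∑ u : V, c u * ∑ v : V, (if G.Adj u v then w u v else 0) :=
            Finset.sum_congr rfl fun u _ => huv u
        _ ≤ ∑ u : V, c u * (d * μ u) :=
            Finset.sum_le_sum fun u _ => mul_le_mul_of_nonneg_left (hdeg u) (hc0 u)
        _ = d * D := by
            rw [hDdef, Finset.mul_sum]
            refine Finset.sum_congr rfl fun u _ => ?_
            have hcu : c u = ‖f u‖ ^ 2 := rfl
            rw [hcu]; ring
    have hAnn : (0:ℝ) ≤ 1 := zero_le_one
    calc Q ≤ _ := step1
      _ = _ := step2
      _ = 4 * ∑ u : V, ∑ v : V, (if G.Adj u v then w u v * c u else 0) := by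
          rw [step3]; ring
      _ ≤ 4 * (d * D) := by linarith [step4]
  -- identify TwoN with 2 * lam * D
  have hlam0 : 0 ≤ lam := rayleigh_nonneg G w μ s hw_pos hμ f
  have hTwoN : 1 / 2 * TwoN = lam * D := by
    have : lam = (1 / 2 * TwoN) / D := by rw [hlamdef, rayleigh, hTwoNdef, hDdef]
    rw [this, div_mul_cancel₀ _ (ne_of_gt hD0)]
  -- put the bounds together
  have hsqrt : Real.sqrt TwoN * Real.sqrt (4 * (d * D)) = Real.sqrt (2 * d * lam) * (2 * D) := by
    rw [← Real.sqrt_mul hTwoN0]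
    have harg : TwoN * (4 * (d * D)) = (2 * d * lam) * (2 * D) ^ 2 := by
      have h2 : TwoN = 2 * (lam * D) := by linarith
      rw [h2]; ring
    rw [harg, Real.sqrt_mul (by nlinarith [hd0, hlam0] : (0:ℝ) ≤ 2 * d * lam),
      Real.sqrt_sq (by linarith [hD0] : (0:ℝ) ≤ 2 * D)]
  have hfinal : (∫ t in (0:ℝ)..T, Φ t) ≤ 0 := by
    rw [hIΦ]
    have h1 : S1 + S2 ≤ 3 / 4 * (Real.sqrt TwoN * Real.sqrt Q) :=
      hpoint.trans (by nlinarith [hCS])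
    have h2 : Real.sqrt Q ≤ Real.sqrt (4 * (d * D)) := Real.sqrt_le_sqrt hQle
    have h3 : Real.sqrt TwoN * Real.sqrt Q ≤ Real.sqrt TwoN * Real.sqrt (4 * (d * D)) :=
      mul_le_mul_of_nonneg_left h2 (Real.sqrt_nonneg _)
    have h4 : S1 + S2 ≤ 3 / 4 * (Real.sqrt (2 * d * lam) * (2 * D)) := by
      rw [← hsqrt]; linarith
    have h5 : K * D = 3 / 4 * (Real.sqrt (2 * d * lam) * (2 * D)) := by
      rw [hKdef]; ring
    linarith
  have hposint := intervalIntegral.intervalIntegral_pos_of_pos_on hΦint hpos hT0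
  linarith

lemma dmu_nonneg (hw_pos : ∀ u v, G.Adj u v → 0 < w u v) (hμ : ∀ u, 0 < μ u) [Nonempty V] :
    0 ≤ dmu G w μ := by
  set u₀ : V := Classical.arbitrary V
  have h1 : (∑ v : V, if G.Adj u₀ v then w u₀ v else 0) / μ u₀ ≤ dmu G w μ := by
    rw [dmu]
    exact le_ciSup (f := fun u : V => (∑ v : V, if G.Adj u v then w u v else 0) / μ u)
      (Set.Finite.bddAbove (Set.finite_range _)) u₀
  refine le_trans ?_ h1
  apply div_nonneg _ (hμ u₀).le
  refine Finset.sum_nonneg fun v _ => ?_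
  split_ifs with h
  · exact (hw_pos u₀ v h).le
  · exact le_refl 0

lemma part2 (hw_sym : ∀ u v, w u v = w v u)
    (hw_pos : ∀ u v, G.Adj u v → 0 < w u v)
    (hμ : ∀ u, 0 < μ u)
    (hs_unit : ∀ u v, G.Adj u v → ‖s u v‖ = 1) [Nonempty V] :
    cheeger1 G w μ s ≤ (3 / 2) * Real.sqrt (2 * dmu G w μ * lam1 G w μ s) := by
  have hd0 : 0 ≤ dmu G w μ := dmu_nonneg G w μ hw_pos hμ
  have hlam0 : 0 ≤ lam1 G w μ s := lam1_nonneg G w μ s hw_pos hμ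
  have key : ∀ ε : ℝ, 0 < ε →
      cheeger1 G w μ s ≤ 3 / 2 * Real.sqrt (2 * dmu G w μ * (lam1 G w μ s + ε)) := by
    intro ε hε
    have hne : Set.Nonempty { x : ℝ | ∃ f : V → ℂ, f ≠ 0 ∧ x = rayleigh G w μ s f } :=
      ⟨_, ⟨(fun _ => (1:ℂ)),
        Function.ne_iff.mpr ⟨Classical.arbitrary V, one_ne_zero⟩, rfl⟩⟩
    obtain ⟨x, ⟨f, hf, rfl⟩, hlt⟩ := Real.lt_sInf_add_pos hne hε
    obtain ⟨V1, hV1, hcut⟩ := exists_good_cut G w μ s hw_sym hw_pos hμ hs_unit f hf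
    have hvol := vol_pos μ hμ hV1
    have hch : cheeger1 G w μ s ≤ (frusIdx G w s V1 + bdry G w V1) / vol μ V1 := by
      apply csInf_le
      · refine ⟨0, ?_⟩
        rintro y ⟨W, hW, rfl⟩
        exact div_nonneg (add_nonneg (frusIdx_nonneg G w s hw_pos W)
          (bdry_nonneg G w hw_pos W)) (vol_pos μ hμ hW).le
      · exact ⟨V1, hV1, rfl⟩
    have h2 : (frusIdx G w s V1 + bdry G w V1) / vol μ V1
        ≤ 3 / 2 * Real.sqrt (2 * dmu G w μ * rayleigh G w μ s f) :=
      (div_le_iff₀ hvol).mpr hcut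
    have h3 : Real.sqrt (2 * dmu G w μ * rayleigh G w μ s f)
        ≤ Real.sqrt (2 * dmu G w μ * (lam1 G w μ s + ε)) := by
      apply Real.sqrt_le_sqrt
      have hray : rayleigh G w μ s f < lam1 G w μ s + ε := hlt
      nlinarith [hd0]
    calc cheeger1 G w μ s ≤ _ := hch
      _ ≤ _ := h2
      _ ≤ _ := by linarith
  by_cases hc : cheeger1 G w μ s ≤ 0
  · exact hc.trans (by positivity)
  · push_neg at hc
    have hsq : ∀ ε : ℝ, 0 < ε → (2 / 3 * cheeger1 G w μ s) ^ 2
        ≤ 2 * dmu G w μ * lam1 G w μ s + 2 * dmu G w μ * ε := by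
      intro ε hε
      have h := key ε hε
      have h23 : 2 / 3 * cheeger1 G w μ s ≤ Real.sqrt (2 * dmu G w μ * (lam1 G w μ s + ε)) := by
        linarith
      have hX : (0:ℝ) ≤ 2 * dmu G w μ * (lam1 G w μ s + ε) := by nlinarith
      have hp := pow_le_pow_left₀ (by linarith : (0:ℝ) ≤ 2 / 3 * cheeger1 G w μ s) h23 2
      rw [Real.sq_sqrt hX] at hp
      nlinarith [hp]
    have hsq' : (2 / 3 * cheeger1 G w μ s) ^ 2 ≤ 2 * dmu G w μ * lam1 G w μ s := by
      rcases eq_or_lt_of_le hd0 with hd | hd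
      · have h1 := hsq 1 one_pos
        rw [← hd] at h1 ⊢
        simpa using h1
      · apply le_of_forall_pos_le_add
        intro ε hε
        have h1 := hsq (ε / (2 * dmu G w μ)) (by positivity)
        have h2d : 2 * dmu G w μ * (ε / (2 * dmu G w μ)) = ε := by
          field_simp
        linarith [h1, h2d.le, h2d.ge]
    calc cheeger1 G w μ s = 3 / 2 * Real.sqrt ((2 / 3 * cheeger1 G w μ s) ^ 2) := by
          rw [Real.sqrt_sq (by linarith : (0:ℝ) ≤ 2 / 3 * cheeger1 G w μ s)]; ring
      _ ≤ 3 / 2 * Real.sqrt (2 * dmu G w μ * lam1 G w μ s) := by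
          have := Real.sqrt_le_sqrt hsq'
          linarith

end Main

theorem stmt_10 {V : Type*} [Fintype V] [DecidableEq V] (G : SimpleGraph V) [DecidableRel G.Adj]
    (w : V → V → ℝ) (μ : V → ℝ) (s : V → V → ℂ)
    (hw_sym : ∀ u v, w u v = w v u)
    (hw_pos : ∀ u v, G.Adj u v → 0 < w u v)
    (hμ : ∀ u, 0 < μ u)
    (hs_unit : ∀ u v, G.Adj u v → ‖s u v‖ = 1)
    (hs_inv : ∀ u v, G.Adj u v → s v u = (s u v)⁻¹) :
    (1 / 2) * lam1 G w μ s ≤ cheeger1 G w μ s ∧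
      cheeger1 G w μ s ≤ (3 / 2) * Real.sqrt (2 * dmu G w μ * lam1 G w μ s) := by
  by_cases hV : Nonempty V
  · exact ⟨part1 G w μ s hw_sym hw_pos hμ hs_unit, part2 G w μ s hw_sym hw_pos hμ hs_unit⟩
  · have hE : IsEmpty V := not_nonempty_iff.mp hV
    have hlam : lam1 G w μ s = 0 := by
      rw [lam1]
      have he : { x : ℝ | ∃ f : V → ℂ, f ≠ 0 ∧ x = rayleigh G w μ s f } = ∅ := by
        rw [Set.eq_empty_iff_forall_notMem]
        rintro x ⟨f, hf, _⟩
        exact hf (funext fun u => (hE.false u).elim)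
      rw [he, Real.sInf_empty]
    have hch : cheeger1 G w μ s = 0 := by
      rw [cheeger1]
      have he : { x : ℝ | ∃ V1 : Finset V, V1.Nonempty ∧
          x = (frusIdx G w s V1 + bdry G w V1) / vol μ V1 } = ∅ := by
        rw [Set.eq_empty_iff_forall_notMem]
        rintro x ⟨V1, ⟨u, _⟩, _⟩
        exact (hE.false u).elim
      rw [he, Real.sInf_empty]
    have hd : dmu G w μ = 0 := by
      rw [dmu]
      exact Real.iSup_of_isEmpty _
    rw [hlam, hch, hd]
    norm_num
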